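/- Let R₊ be the orthogonal projection of L²(𝕋) onto the closed linear span of {eₙ : n ≥ 0}, where eₙ(e^{iθ}) = e^{inθ}. Let f ∈ L^∞(𝕋) satisfy f̂(n) = 0 for all n > 0 (equivalently, g = conj(f) is the boundary value of a function holomorphic in the unit disc), let g = conj(f), and define W = M_g∘[M_f, R₊] − M_f∘[M_g, R₊] on L²(𝕋). Then for all m, n ∈ ℕ: ⟨W eₙ, eₘ⟩ = ∑_{j=0}^∞ conj(f̂(−(j+m+1)))·f̂(−(j+n+1)); that is, R₊WR₊ = Γ_f*Γ_f. -/

import Mathlib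

open MeasureTheory AddCircle
open scoped Real ENNReal InnerProductSpace

instance : Fact (0 < 2 * π) := ⟨by positivity⟩

/-- The Hardy subspace `H²` of `L²(𝕋)`: the closed linear span of `{eₙ : n ≥ 0}`. -/
noncomputable def hardySubmodule :
    Submodule ℂ (Lp ℂ 2 (@haarAddCircle (2 * π) _)) :=
  (Submodule.span ℂ (Set.range fun n : ℕ => fourierLp 2 (n : ℤ))).topologicalClosure

instance : CompleteSpace hardySubmodule :=
  Submodule.topologicalClosure.completeSpace _

/-- The Riesz projection `R₊`: the orthogonal projection of `L²(𝕋)` onto the Hardy space. -/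
noncomputable def rieszPlus :
    Lp ℂ 2 (@haarAddCircle (2 * π) _) →L[ℂ] Lp ℂ 2 (@haarAddCircle (2 * π) _) :=
  hardySubmodule.subtypeL ∘L hardySubmodule.orthogonalProjectionOnto

open scoped ComplexConjugate

lemma inner_fourierLp_eq (u : Lp ℂ 2 (@haarAddCircle (2 * π) _)) (k : ℤ) :
    ⟪(fourierLp 2 k : Lp ℂ 2 (@haarAddCircle (2 * π) _)), u⟫_ℂ = fourierCoeff (⇑u) k := by
  rw [← fourierBasis_repr, HilbertBasis.repr_apply_apply, coe_fourierBasis]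

lemma parseval (u v : Lp ℂ 2 (@haarAddCircle (2 * π) _)) :
    ⟪u, v⟫_ℂ = ∑' k : ℤ, conj (fourierCoeff (⇑u) k) * fourierCoeff (⇑v) k := by
  rw [← fourierBasis.repr.inner_map_map u v, lp.inner_eq_tsum]
  congr 1
  ext k
  rw [fourierBasis_repr, fourierBasis_repr, RCLike.inner_apply, mul_comm]

lemma mem_hardy_of_coeff (u : Lp ℂ 2 (@haarAddCircle (2 * π) _))
    (h : ∀ k : ℤ, k < 0 → fourierCoeff (⇑u) k = 0) : u ∈ hardySubmodule := by
  set S := Submodule.span ℂ (Set.range fun n : ℕ =>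
    (fourierLp 2 (n : ℤ) : Lp ℂ 2 (@haarAddCircle (2 * π) _))) with hS
  have hs := hasSum_fourier_series_L2 u
  have hmem : ∀ s : Finset ℤ,
      (∑ i ∈ s, fourierCoeff (⇑u) i • (fourierLp 2 i : Lp ℂ 2 (@haarAddCircle (2 * π) _))) ∈ S := by
    intro s
    refine Submodule.sum_mem _ fun i _ => ?_
    rcases lt_or_ge i 0 with hi | hi
    · rw [h i hi, zero_smul]; exact S.zero_mem
    · refine Submodule.smul_mem _ _ (Submodule.subset_span ⟨i.toNat, ?_⟩)
      simp [Int.toNat_of_nonneg hi]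
  have h2 : u ∈ closure (S : Set (Lp ℂ 2 (@haarAddCircle (2 * π) _))) :=
    mem_closure_of_tendsto hs (Filter.Eventually.of_forall hmem)
  rw [← Submodule.topologicalClosure_coe] at h2
  exact h2

lemma inner_fourierLp_zero_of_mem {k : ℤ} (hk : k < 0)
    {x : Lp ℂ 2 (@haarAddCircle (2 * π) _)} (hx : x ∈ hardySubmodule) :
    ⟪(fourierLp 2 k : Lp ℂ 2 (@haarAddCircle (2 * π) _)), x⟫_ℂ = 0 := by
  have hle : hardySubmodule ≤ (ℂ ∙ (fourierLp 2 k : Lp ℂ 2 (@haarAddCircle (2 * π) _)))ᗮ := by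
    refine Submodule.topologicalClosure_minimal _ ?_ (Submodule.isClosed_orthogonal _)
    rw [Submodule.span_le]
    rintro _ ⟨n, rfl⟩
    rw [SetLike.mem_coe, Submodule.mem_orthogonal_singleton_iff_inner_right]
    have horth := (@fourierBasis (2 * π) _).orthonormal
    have hne : k ≠ (n : ℤ) := by omega
    have := horth.2 hne
    rwa [coe_fourierBasis] at this
  exact Submodule.mem_orthogonal_singleton_iff_inner_right.mp (hle hx)

lemma coeff_mulOp (h : AddCircle (2 * π) → ℂ)
    (Mh : Lp ℂ 2 (@haarAddCircle (2 * π) _) →L[ℂ] Lp ℂ 2 (@haarAddCircle (2 * π) _))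
    (hMh : ∀ u : Lp ℂ 2 (@haarAddCircle (2 * π) _),
      (Mh u : AddCircle (2 * π) → ℂ) =ᵐ[@haarAddCircle (2 * π) _] fun x => h x * u x)
    (n k : ℤ) :
    ⟪(fourierLp 2 k : Lp ℂ 2 (@haarAddCircle (2 * π) _)), Mh (fourierLp 2 n)⟫_ℂ
      = fourierCoeff h (k - n) := by
  rw [L2.inner_def, fourierCoeff]
  apply integral_congr_ae
  filter_upwards [hMh (fourierLp 2 n), coeFn_fourierLp 2 n, coeFn_fourierLp 2 k]
    with x h1 h2 h3
  rw [RCLike.inner_apply, h1, h2, h3, smul_eq_mul]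
  have e1 : (-(k - n) : ℤ) = n + -k := by ring
  rw [e1, fourier_add, fourier_neg]
  ring

lemma coeff_conjMulOp (f g : AddCircle (2 * π) → ℂ)
    (hfg : g = fun x => starRingEnd ℂ (f x))
    (Mg : Lp ℂ 2 (@haarAddCircle (2 * π) _) →L[ℂ] Lp ℂ 2 (@haarAddCircle (2 * π) _))
    (hMg : ∀ u : Lp ℂ 2 (@haarAddCircle (2 * π) _),
      (Mg u : AddCircle (2 * π) → ℂ) =ᵐ[@haarAddCircle (2 * π) _] fun x => g x * u x)
    (n k : ℤ) :
    ⟪(fourierLp 2 k : Lp ℂ 2 (@haarAddCircle (2 * π) _)), Mg (fourierLp 2 n)⟫_ℂ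
      = conj (fourierCoeff f (n - k)) := by
  rw [L2.inner_def, fourierCoeff, ← integral_conj]
  apply integral_congr_ae
  filter_upwards [hMg (fourierLp 2 n), coeFn_fourierLp 2 n, coeFn_fourierLp 2 k]
    with x h1 h2 h3
  rw [RCLike.inner_apply, h1, h2, h3, hfg, smul_eq_mul, map_mul]
  have e1 : (-(n - k) : ℤ) = k + -n := by ring
  rw [e1, fourier_add, fourier_neg]
  simp only [map_mul, Complex.conj_conj]
  ring

lemma adjMgMf (f g : AddCircle (2 * π) → ℂ)
    (hfg : g = fun x => starRingEnd ℂ (f x))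
    (Mf Mg : Lp ℂ 2 (@haarAddCircle (2 * π) _) →L[ℂ] Lp ℂ 2 (@haarAddCircle (2 * π) _))
    (hMf : ∀ u : Lp ℂ 2 (@haarAddCircle (2 * π) _),
      (Mf u : AddCircle (2 * π) → ℂ) =ᵐ[@haarAddCircle (2 * π) _] fun x => f x * u x)
    (hMg : ∀ u : Lp ℂ 2 (@haarAddCircle (2 * π) _),
      (Mg u : AddCircle (2 * π) → ℂ) =ᵐ[@haarAddCircle (2 * π) _] fun x => g x * u x)
    (u w : Lp ℂ 2 (@haarAddCircle (2 * π) _)) :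
    ⟪u, Mg w⟫_ℂ = ⟪Mf u, w⟫_ℂ := by
  rw [L2.inner_def, L2.inner_def]
  apply integral_congr_ae
  filter_upwards [hMg w, hMf u] with x h1 h2
  rw [RCLike.inner_apply, RCLike.inner_apply, h1, h2, hfg]
  simp only [map_mul, Complex.conj_conj]
  ring

lemma rieszPlus_apply (u : Lp ℂ 2 (@haarAddCircle (2 * π) _)) :
    rieszPlus u = (hardySubmodule.orthogonalProjectionOnto u : Lp ℂ 2 (@haarAddCircle (2 * π) _)) :=
  rfl

lemma rieszPlus_mem (u : Lp ℂ 2 (@haarAddCircle (2 * π) _)) :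
    rieszPlus u ∈ hardySubmodule := by
  rw [rieszPlus_apply]; exact SetLike.coe_mem _

lemma rieszPlus_eq_self {u : Lp ℂ 2 (@haarAddCircle (2 * π) _)}
    (hu : u ∈ hardySubmodule) : rieszPlus u = u := by
  rw [rieszPlus_apply, ← Submodule.starProjection_apply, Submodule.starProjection_eq_self_iff.mpr hu]

lemma inner_rieszPlus {u : Lp ℂ 2 (@haarAddCircle (2 * π) _)}
    (hu : u ∈ hardySubmodule) (v : Lp ℂ 2 (@haarAddCircle (2 * π) _)) :
    ⟪u, rieszPlus v⟫_ℂ = ⟪u, v⟫_ℂ := by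
  rw [rieszPlus_apply, ← Submodule.starProjection_apply, ← Submodule.inner_starProjection_left_eq_right,
    Submodule.starProjection_eq_self_iff.mpr hu]

lemma fourierLp_mem_hardy (n : ℕ) :
    (fourierLp 2 (n : ℤ) : Lp ℂ 2 (@haarAddCircle (2 * π) _)) ∈ hardySubmodule :=
  Submodule.le_topologicalClosure _ (Submodule.subset_span ⟨n, rfl⟩)

/-- If `f ∈ L^∞(𝕋)` has `f̂(n) = 0` for all `n > 0` (so `g = conj f` is holomorphic in the
disc), then the compression of `W = M_g[M_f,R₊] − M_f[M_g,R₊]` to `H²` has matrix entries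
`⟨W eₙ, eₘ⟩ = ∑_j conj f̂(−(j+m+1))·f̂(−(j+n+1))`; that is, `R₊WR₊ = Γ_f*Γ_f`. -/
theorem stmt_17 (f g : AddCircle (2 * π) → ℂ)
    (hf : MemLp f ⊤ (@haarAddCircle (2 * π) _))
    (hcoeff : ∀ n : ℤ, 0 < n → fourierCoeff f n = 0)
    (hfg : g = fun x => starRingEnd ℂ (f x))
    (Mf Mg : Lp ℂ 2 (@haarAddCircle (2 * π) _) →L[ℂ] Lp ℂ 2 (@haarAddCircle (2 * π) _))
    (hMf : ∀ u : Lp ℂ 2 (@haarAddCircle (2 * π) _),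
      (Mf u : AddCircle (2 * π) → ℂ) =ᵐ[@haarAddCircle (2 * π) _] fun x => f x * u x)
    (hMg : ∀ u : Lp ℂ 2 (@haarAddCircle (2 * π) _),
      (Mg u : AddCircle (2 * π) → ℂ) =ᵐ[@haarAddCircle (2 * π) _] fun x => g x * u x)
    (W : Lp ℂ 2 (@haarAddCircle (2 * π) _) →L[ℂ] Lp ℂ 2 (@haarAddCircle (2 * π) _))
    (hW : W = Mg ∘L (Mf ∘L rieszPlus - rieszPlus ∘L Mf)
            - Mf ∘L (Mg ∘L rieszPlus - rieszPlus ∘L Mg)) :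
    ∀ m n : ℕ,
      ⟪(fourierLp 2 (m : ℤ) : Lp ℂ 2 (@haarAddCircle (2 * π) _)),
          W (fourierLp 2 (n : ℤ))⟫_ℂ
        = ∑' j : ℕ,
            starRingEnd ℂ (fourierCoeff f (-(j + m + 1 : ℤ)))
              * fourierCoeff f (-(j + n + 1 : ℤ)) := by
  intro m n
  -- coefficients of `Mf e_p - R₊ (Mf e_p)`
  have hcw : ∀ (p : ℕ) (k : ℤ),
      fourierCoeff (⇑(Mf (fourierLp 2 (p : ℤ)) - rieszPlus (Mf (fourierLp 2 (p : ℤ))))) k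
        = if k < 0 then fourierCoeff f (k - p) else 0 := by
    intro p k
    rw [← inner_fourierLp_eq, inner_sub_right, coeff_mulOp f Mf hMf]
    split_ifs with hk
    · rw [inner_fourierLp_zero_of_mem hk (rieszPlus_mem _), sub_zero]
    · have hkmem : (fourierLp 2 k : Lp ℂ 2 (@haarAddCircle (2 * π) _)) ∈ hardySubmodule := by
        have hknat : k = ((k.toNat : ℕ) : ℤ) := by omega
        rw [hknat]; exact fourierLp_mem_hardy _
      rw [inner_rieszPlus hkmem, coeff_mulOp f Mf hMf, sub_self]
  -- `g·e_n` lies in the Hardy space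
  have hMgn : rieszPlus (Mg (fourierLp 2 (n : ℤ))) = Mg (fourierLp 2 (n : ℤ)) := by
    refine rieszPlus_eq_self (mem_hardy_of_coeff _ fun k hk => ?_)
    rw [← inner_fourierLp_eq, coeff_conjMulOp f g hfg Mg hMg, hcoeff _ (by omega), map_zero]
  -- compute `W e_n`
  have hWen : W (fourierLp 2 (n : ℤ))
      = Mg (Mf (fourierLp 2 (n : ℤ)) - rieszPlus (Mf (fourierLp 2 (n : ℤ)))) := by
    rw [hW]
    simp only [ContinuousLinearMap.sub_apply, ContinuousLinearMap.comp_apply,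
      rieszPlus_eq_self (fourierLp_mem_hardy n), hMgn, sub_self, map_zero, sub_zero]
  rw [hWen, adjMgMf f g hfg Mf Mg hMf hMg]
  have hz : ⟪rieszPlus (Mf (fourierLp 2 (m : ℤ))),
      Mf (fourierLp 2 (n : ℤ)) - rieszPlus (Mf (fourierLp 2 (n : ℤ)))⟫_ℂ = 0 := by
    rw [inner_sub_right, inner_rieszPlus (rieszPlus_mem _), sub_self]
  have hfull : ⟪Mf (fourierLp 2 (m : ℤ)),
        Mf (fourierLp 2 (n : ℤ)) - rieszPlus (Mf (fourierLp 2 (n : ℤ)))⟫_ℂ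
      = ⟪Mf (fourierLp 2 (m : ℤ)) - rieszPlus (Mf (fourierLp 2 (m : ℤ))),
        Mf (fourierLp 2 (n : ℤ)) - rieszPlus (Mf (fourierLp 2 (n : ℤ)))⟫_ℂ := by
    rw [inner_sub_left, hz, sub_zero]
  rw [hfull, parseval]
  have hinj : Function.Injective (fun j : ℕ => (-(j + 1) : ℤ)) := by
    intro a b hab
    simp only at hab
    omega
  have hsupp : Function.support (fun k : ℤ =>
      conj (fourierCoeff
          (⇑(Mf (fourierLp 2 (m : ℤ)) - rieszPlus (Mf (fourierLp 2 (m : ℤ))))) k)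
        * fourierCoeff
          (⇑(Mf (fourierLp 2 (n : ℤ)) - rieszPlus (Mf (fourierLp 2 (n : ℤ))))) k)
      ⊆ Set.range (fun j : ℕ => (-(j + 1) : ℤ)) := by
    intro k hk
    rcases lt_or_ge k 0 with h | h
    · exact ⟨(-k - 1).toNat, by simp only []; omega⟩
    · exfalso
      apply hk
      simp only [hcw, if_neg (not_lt.mpr h), map_zero, zero_mul]
  have key := Function.Injective.tsum_eq hinj hsupp
  rw [← key]
  refine tsum_congr fun j => ?_
  simp only [hcw, if_pos (show (-((j : ℤ) + 1) : ℤ) < 0 by omega)]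
  have e1 : (-((j : ℤ) + 1) - (m : ℤ)) = -((j : ℤ) + (m : ℤ) + 1) := by ring
  have e2 : (-((j : ℤ) + 1) - (n : ℤ)) = -((j : ℤ) + (n : ℤ) + 1) := by ring
  rw [e1, e2]
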